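/- In the same instance, for any α ∈ [0,1), the overall principal's expected utility under the linear contract with parameter α is at most 2·2^{-2ℓ}/N, where N = Σ_{k=1}^{ℓ} 2^{2(k−ℓ)}. Consequently, the ratio of the optimal contract's utility ℓ·2^{-2ℓ}/N to the best linear contract's utility is at least ℓ/2, so the worst-case multiplicative loss of linear contracts grows at least linearly in the number of types ℓ. -/

import Mathlib

/-- In the lower-bound instance, any linear contract with `α ∈ [0,1)` yields overall
principal expected utility at most `2 · 2^{-2ℓ} / N`; hence the optimal utility
`ℓ · 2^{-2ℓ} / N` is at least `ℓ/2` times the linear contract's utility. -/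
theorem stmt7 (ℓ : ℕ) (hℓ : 1 ≤ ℓ)
    (N : ℝ) (hN : N = ∑ k ∈ Finset.Icc 1 ℓ, (2:ℝ)^(2*((k:ℤ) - ℓ)))
    (μ : ℕ → ℝ) (hμ : ∀ k, μ k = (2:ℝ)^(2*((k:ℤ) - ℓ)) / N)
    (α : ℝ) (hα0 : 0 ≤ α) (hα1 : α < 1) :
    (∑ k ∈ (Finset.Icc 1 ℓ).filter
        (fun k => (1/2:ℝ)^k * (1 - (1/2:ℝ)^k) ≤ α * (1/2:ℝ)^k),
        μ k * (1 - α) * (1/2:ℝ)^k) ≤ 2 * (1/2:ℝ)^(2*ℓ) / N ∧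
    ((ℓ:ℝ)/2) * (∑ k ∈ (Finset.Icc 1 ℓ).filter
        (fun k => (1/2:ℝ)^k * (1 - (1/2:ℝ)^k) ≤ α * (1/2:ℝ)^k),
        μ k * (1 - α) * (1/2:ℝ)^k) ≤ ℓ * (1/2:ℝ)^(2*ℓ) / N := by
  have hN0 : 0 < N := by
    rw [hN]
    apply Finset.sum_pos
    · intro k _; positivity
    · exact ⟨1, Finset.mem_Icc.mpr ⟨le_refl 1, hℓ⟩⟩
  set S := (Finset.Icc 1 ℓ).filter
      (fun k => (1/2:ℝ)^k * (1 - (1/2:ℝ)^k) ≤ α * (1/2:ℝ)^k) with hS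
  -- key: for k ∈ S, 1 - α ≤ (1/2)^k
  have hkey : ∀ k ∈ S, 1 - α ≤ (1/2:ℝ)^k := by
    intro k hk
    have hc := (Finset.mem_filter.mp hk).2
    have hp : (0:ℝ) < (1/2:ℝ)^k := by positivity
    nlinarith [hc, hp]
  -- crux: ∑_{k∈S} (1-α) * 2^k ≤ 2
  have hcrux : (∑ k ∈ S, (1 - α) * (2:ℝ)^k) ≤ 2 := by
    rcases S.eq_empty_or_nonempty with hE | hE
    · simp [hE]
    · set K := S.max' hE with hK
      have hKS : K ∈ S := S.max'_mem hE
      have h1 : 1 - α ≤ (1/2:ℝ)^K := hkey K hKS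
      have hsub : S ⊆ Finset.range (K+1) := by
        intro k hk
        exact Finset.mem_range.mpr (Nat.lt_succ_of_le (S.le_max' k hk))
      calc (∑ k ∈ S, (1 - α) * (2:ℝ)^k)
          ≤ ∑ k ∈ S, (1/2:ℝ)^K * (2:ℝ)^k := by
            apply Finset.sum_le_sum
            intro k hk
            have : (0:ℝ) ≤ (2:ℝ)^k := by positivity
            exact mul_le_mul_of_nonneg_right h1 this
        _ ≤ ∑ k ∈ Finset.range (K+1), (1/2:ℝ)^K * (2:ℝ)^k := by
            apply Finset.sum_le_sum_of_subset_of_nonneg hsub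
            intro k _ _; positivity
        _ = (1/2:ℝ)^K * ((2:ℝ)^(K+1) - 1) := by
            rw [← Finset.mul_sum]
            congr 1
            have := geom_sum_eq (by norm_num : (2:ℝ) ≠ 1) (K+1)
            rw [this]; ring
        _ ≤ (1/2:ℝ)^K * (2:ℝ)^(K+1) := by
            apply mul_le_mul_of_nonneg_left _ (by positivity)
            linarith
        _ = 2 := by
            rw [pow_succ]
            rw [one_div, inv_pow, inv_mul_eq_div, mul_comm, mul_div_assoc,
              div_self (by positivity : ((2:ℝ)^K) ≠ 0)]
            ring
  -- rewrite terms
  have hterm : ∀ k ∈ S, μ k * (1 - α) * (1/2:ℝ)^k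
      = ((1 - α) * (2:ℝ)^k * (1/2:ℝ)^(2*ℓ)) / N := by
    intro k hk
    rw [hμ k]
    have h2 : (2:ℝ)^(2*((k:ℤ) - ℓ)) = (2:ℝ)^(2*k:ℕ) * ((1/2:ℝ)^(2*ℓ:ℕ)) := by
      rw [one_div, inv_pow, ← zpow_natCast (2:ℝ) (2*k), ← zpow_natCast (2:ℝ) (2*ℓ),
        ← zpow_neg, ← zpow_add₀ (by norm_num : (2:ℝ) ≠ 0)]
      congr 1
      push_cast
      ring
    rw [h2]
    have h3 : ((2:ℝ)^(2*k:ℕ)) * (1/2:ℝ)^k = (2:ℝ)^k := by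
      rw [one_div, inv_pow, two_mul, pow_add, mul_assoc,
        mul_inv_cancel₀ (by positivity : ((2:ℝ)^k) ≠ 0), mul_one]
    field_simp
    ring_nf
    linear_combination (1 - α) * h3
  have hmain : (∑ k ∈ S, μ k * (1 - α) * (1/2:ℝ)^k) ≤ 2 * (1/2:ℝ)^(2*ℓ) / N := by
    rw [Finset.sum_congr rfl hterm, ← Finset.sum_div]
    gcongr
    rw [← Finset.sum_mul]
    have hp : (0:ℝ) ≤ (1/2:ℝ)^(2*ℓ) := by positivity
    nlinarith [hcrux, hp]
  exact ⟨hmain, by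
    have h2 : ((ℓ:ℝ)/2) * (∑ k ∈ S, μ k * (1 - α) * (1/2:ℝ)^k)
        ≤ ((ℓ:ℝ)/2) * (2 * (1/2:ℝ)^(2*ℓ) / N) := by
      apply mul_le_mul_of_nonneg_left hmain (by positivity)
    calc ((ℓ:ℝ)/2) * (∑ k ∈ S, μ k * (1 - α) * (1/2:ℝ)^k)
        ≤ ((ℓ:ℝ)/2) * (2 * (1/2:ℝ)^(2*ℓ) / N) := h2
      _ = ℓ * (1/2:ℝ)^(2*ℓ) / N := by ring⟩
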